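/- Let 0 < β ≤ α and let S = {(a, b) ∈ ℝ² : β ≤ |a − b| ≤ α}. Define P : ℝ² → ℝ² by: P(a,b) = ((a+b+α)/2, (a+b−α)/2) if b < a − α; P(a,b) = (a,b) if a − α ≤ b ≤ a − β; P(a,b) = ((a+b+β)/2, (a+b−β)/2) if a − β < b ≤ a; P(a,b) = ((a+b−β)/2, (a+b+β)/2) if a < b < a + β; P(a,b) = (a,b) if a + β ≤ b ≤ a + α; and P(a,b) = ((a+b−α)/2, (a+b+α)/2) if b > a + α. Then for every (a,b) ∈ ℝ², P(a,b) ∈ S and ‖(a,b) − P(a,b)‖ ≤ ‖(a,b) − s‖ for every s ∈ S; i.e., P(a,b) is a nearest point of the (nonconvex) set S to (a,b). -/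

import Mathlib

open scoped Classical

noncomputable def pt (a b : ℝ) : EuclideanSpace ℝ (Fin 2) :=
  (WithLp.equiv 2 (Fin 2 → ℝ)).symm ![a, b]

lemma norm_sub_pt (x y : ℝ) (s : EuclideanSpace ℝ (Fin 2)) :
    ‖pt x y - s‖ = Real.sqrt ((x - s 0)^2 + (y - s 1)^2) := by
  have h : pt x y - s = pt (x - s 0) (y - s 1) := by
    ext i; fin_cases i <;> rfl
  rw [h, EuclideanSpace.norm_eq]
  simp [pt, Fin.sum_univ_two, sq_abs]

theorem stmt_18 (α β : ℝ) (hβ : 0 < β) (hβα : β ≤ α) (a b : ℝ) :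
    let S : Set (EuclideanSpace ℝ (Fin 2)) := {z | β ≤ |z 0 - z 1| ∧ |z 0 - z 1| ≤ α}
    let P : EuclideanSpace ℝ (Fin 2) :=
      if b < a - α then pt ((a + b + α) / 2) ((a + b - α) / 2)
      else if b ≤ a - β then pt a b
      else if b ≤ a then pt ((a + b + β) / 2) ((a + b - β) / 2)
      else if b < a + β then pt ((a + b - β) / 2) ((a + b + β) / 2)
      else if b ≤ a + α then pt a b
      else pt ((a + b - α) / 2) ((a + b + α) / 2)
    P ∈ S ∧ ∀ s ∈ S, ‖pt a b - P‖ ≤ ‖pt a b - s‖ := by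
  intro S P
  have hmem : ∀ s : EuclideanSpace ℝ (Fin 2), s ∈ S ↔ β ≤ |s 0 - s 1| ∧ |s 0 - s 1| ≤ α :=
    fun s => Iff.rfl
  have hkey : ∀ x y : ℝ, ∀ s ∈ S,
      (a - x)^2 + (b - y)^2 ≤ (a - s 0)^2 + (b - s 1)^2 →
      ‖pt a b - pt x y‖ ≤ ‖pt a b - s‖ := by
    intro x y s _ h
    rw [norm_sub_pt, norm_sub_pt]
    have h0 : pt x y 0 = x := rfl
    have h1 : pt x y 1 = y := rfl
    rw [h0, h1]
    exact Real.sqrt_le_sqrt h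
  unfold P
  split_ifs with h1 h2 h3 h4 h5
  · -- b < a - α
    refine ⟨(hmem _).mpr ⟨?_, ?_⟩, fun s hs => ?_⟩
    · show β ≤ |(a + b + α)/2 - (a + b - α)/2|; rw [abs_of_pos (by linarith)]; linarith
    · show |(a + b + α)/2 - (a + b - α)/2| ≤ α; rw [abs_of_pos (by linarith)]; linarith
    · obtain ⟨hsβ, hsα⟩ := (hmem s).mp hs
      obtain ⟨hl, hr⟩ := abs_le.mp hsα
      refine hkey _ _ s hs ?_
      nlinarith [sq_nonneg ((a - s 0) + (b - s 1)),
        mul_nonneg (by linarith : (0:ℝ) ≤ α - (s 0 - s 1))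
          (by linarith : (0:ℝ) ≤ 2*(a-b) - (s 0 - s 1) - α)]
  · -- a - α ≤ b ≤ a - β : P = (a,b)
    refine ⟨(hmem _).mpr ⟨?_, ?_⟩, fun s hs => ?_⟩
    · show β ≤ |a - b|; rw [abs_of_pos (by linarith)]; linarith
    · show |a - b| ≤ α; rw [abs_of_pos (by linarith)]; linarith
    · simp only [sub_self, norm_zero]; positivity
  · -- a - β < b ≤ a
    refine ⟨(hmem _).mpr ⟨?_, ?_⟩, fun s hs => ?_⟩
    · show β ≤ |(a + b + β)/2 - (a + b - β)/2|; rw [abs_of_pos (by linarith)]; linarith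
    · show |(a + b + β)/2 - (a + b - β)/2| ≤ α; rw [abs_of_pos (by linarith)]; linarith
    · obtain ⟨hsβ, hsα⟩ := (hmem s).mp hs
      obtain ⟨hl, hr⟩ := abs_le.mp hsα
      refine hkey _ _ s hs ?_
      rcases le_abs.mp hsβ with ht | ht
      · nlinarith [sq_nonneg ((a - s 0) + (b - s 1)),
          mul_nonneg (by linarith : (0:ℝ) ≤ (s 0 - s 1) - β)
            (by linarith : (0:ℝ) ≤ (s 0 - s 1) + β - 2*(a-b))]
      · nlinarith [sq_nonneg ((a - s 0) + (b - s 1)),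
          mul_nonneg (by linarith : (0:ℝ) ≤ β - (s 0 - s 1))
            (by linarith : (0:ℝ) ≤ 2*(a-b) - (s 0 - s 1) - β)]
  · -- a < b < a + β
    refine ⟨(hmem _).mpr ⟨?_, ?_⟩, fun s hs => ?_⟩
    · show β ≤ |(a + b - β)/2 - (a + b + β)/2|; rw [abs_of_neg (by linarith)]; linarith
    · show |(a + b - β)/2 - (a + b + β)/2| ≤ α; rw [abs_of_neg (by linarith)]; linarith
    · obtain ⟨hsβ, hsα⟩ := (hmem s).mp hs
      obtain ⟨hl, hr⟩ := abs_le.mp hsα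
      refine hkey _ _ s hs ?_
      rcases le_abs.mp hsβ with ht | ht
      · nlinarith [sq_nonneg ((a - s 0) + (b - s 1)),
          mul_nonneg (by linarith : (0:ℝ) ≤ (s 0 - s 1) + β)
            (by linarith : (0:ℝ) ≤ (s 0 - s 1) - β - 2*(a-b))]
      · nlinarith [sq_nonneg ((a - s 0) + (b - s 1)),
          mul_nonneg (by linarith : (0:ℝ) ≤ -(s 0 - s 1) - β)
            (by linarith : (0:ℝ) ≤ -(s 0 - s 1) + β + 2*(a-b))]
  · -- a + β ≤ b ≤ a + α : P = (a,b)
    refine ⟨(hmem _).mpr ⟨?_, ?_⟩, fun s hs => ?_⟩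
    · show β ≤ |a - b|; rw [abs_of_neg (by linarith)]; linarith
    · show |a - b| ≤ α; rw [abs_of_neg (by linarith)]; linarith
    · simp only [sub_self, norm_zero]; positivity
  · -- b > a + α
    refine ⟨(hmem _).mpr ⟨?_, ?_⟩, fun s hs => ?_⟩
    · show β ≤ |(a + b - α)/2 - (a + b + α)/2|; rw [abs_of_neg (by linarith)]; linarith
    · show |(a + b - α)/2 - (a + b + α)/2| ≤ α; rw [abs_of_neg (by linarith)]; linarith
    · obtain ⟨hsβ, hsα⟩ := (hmem s).mp hs
      obtain ⟨hl, hr⟩ := abs_le.mp hsα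
      refine hkey _ _ s hs ?_
      nlinarith [sq_nonneg ((a - s 0) + (b - s 1)),
        mul_nonneg (by linarith : (0:ℝ) ≤ (s 0 - s 1) + α)
          (by linarith : (0:ℝ) ≤ (s 0 - s 1) + α - 2*(a-b))]
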